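/- Let p ∈ [1,∞] with conjugate exponent q (1/p + 1/q = 1), let 𝔤 : ℝ → ℂ be continuous, G : ℝ → (0,∞) locally integrable, ω : (0,∞) → (0,∞) non-decreasing, δ₀ > 0 and C > 0, and suppose that ‖ (sup_{|u| ≤ δ} |𝔤(t+u) − 𝔤(t)|) / G(t) ‖_{L^p(ℝ, dt)} ≤ C ω(δ) for all 0 < δ ≤ δ₀. Then for every fixed δ with 0 < δ ≤ δ₀ there exists a constant C' > 0, depending only on C, ω(δ) and δ, such that for all λ > δ: ∫_0^λ |𝔤(t)| dt ≤ C' ( |𝔤(0)| λ + λ ‖G·χ_{(-λ,λ)}‖_{L^q(ℝ)} ), where χ_{(-λ,λ)} is the indicator function of (−λ,λ). -/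

import Mathlib

open MeasureTheory
open scoped ENNReal

/-- The estimate `∫_0^λ |𝔤(t)| dt ≪ |𝔤(0)|λ + λ‖G·χ_{(-λ,λ)}‖_{L^q}` for a continuous function
`𝔤` that is uniformly Hölder continuous with respect to `L^p`, `G` and `ω`. -/
theorem stmt_16 (p q : ℝ≥0∞) (hp : 1 ≤ p) (hq : 1 ≤ q) (hpq : p⁻¹ + q⁻¹ = 1)
    (𝔤 : ℝ → ℂ) (h𝔤 : Continuous 𝔤)
    (G : ℝ → ℝ) (hGpos : ∀ t, 0 < G t) (hGloc : LocallyIntegrable G)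
    (ω : ℝ → ℝ) (hωmono : MonotoneOn ω (Set.Ioi 0)) (hωpos : ∀ y, 0 < y → 0 < ω y)
    (δ₀ C : ℝ) (hδ₀ : 0 < δ₀) (hC : 0 < C)
    (hHC : ∀ δ : ℝ, 0 < δ → δ ≤ δ₀ →
      eLpNorm (fun t => (⨆ u ∈ Set.Icc (-δ) δ, ‖𝔤 (t + u) - 𝔤 t‖) / G t) p volume ≤
        ENNReal.ofReal (C * ω δ)) :
    ∀ δ : ℝ, 0 < δ → δ ≤ δ₀ →
      ∃ C' : ℝ, 0 < C' ∧ ∀ lam : ℝ, δ < lam →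
        ENNReal.ofReal (∫ t in Set.Ioc (0:ℝ) lam, ‖𝔤 t‖) ≤
          ENNReal.ofReal (C' * (‖𝔤 0‖ * lam)) +
            ENNReal.ofReal (C' * lam) *
              eLpNorm (Set.indicator (Set.Ioo (-lam) lam) G) q volume := by
  intro δ hδ hδδ₀
  set F : ℝ → ℝ := fun t => ⨆ u ∈ Set.Icc (-δ) δ, ‖𝔤 (t + u) - 𝔤 t‖ with hFdef
  have hHCδ : eLpNorm (fun t => F t / G t) p volume ≤ ENNReal.ofReal (C * ω δ) :=
    hHC δ hδ hδδ₀
  -- boundedness of the sup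
  have hbdd : ∀ t : ℝ, BddAbove ((fun u => ‖𝔤 (t + u) - 𝔤 t‖) '' Set.Icc (-δ) δ) := by
    intro t
    apply IsCompact.bddAbove_image isCompact_Icc
    exact (((h𝔤.comp (continuous_const.add continuous_id)).sub continuous_const).norm).continuousOn
  have hne : (Set.Icc (-δ) δ).Nonempty := ⟨0, by constructor <;> linarith⟩
  have hsub : ∀ t : ℝ, (⨆ i : Set.Icc (-δ) δ, ‖𝔤 (t + (i : ℝ)) - 𝔤 t‖) = F t := by
    intro t
    have h1 : BddAbove (Set.range fun i : Set.Icc (-δ) δ => ‖𝔤 (t + (i : ℝ)) - 𝔤 t‖) := by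
      obtain ⟨M, hM⟩ := hbdd t
      exact ⟨M, by rintro x ⟨i, rfl⟩; exact hM ⟨i, i.2, rfl⟩⟩
    have h2 : sSup (∅ : Set ℝ) ≤ ⨆ i : Set.Icc (-δ) δ, ‖𝔤 (t + (i : ℝ)) - 𝔤 t‖ := by
      rw [Real.sSup_empty]
      exact Real.iSup_nonneg fun i => norm_nonneg _
    exact ciSup_subtype'' (f := fun u => ‖𝔤 (t + u) - 𝔤 t‖) h1 h2
  -- the hop inequality
  have hhop : ∀ t s : ℝ, 0 ≤ s → s ≤ δ → ‖𝔤 (t - s) - 𝔤 t‖ ≤ F t := by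
    intro t s h0 hsδ
    have hmem : -s ∈ Set.Icc (-δ) δ := by constructor <;> linarith
    have h := le_ciSup_set (hbdd t) hmem
    rw [show t - s = t + (-s) by ring]
    exact h.trans (le_of_eq (hsub t))
  have hF0 : ∀ t, 0 ≤ F t := by
    intro t
    have := hhop t 0 le_rfl hδ.le
    simpa using this
  -- continuity of F
  have hFcont : Continuous F := by
    let Φ : C(ℝ × Set.Icc (-δ) δ, ℝ) := ⟨fun p => ‖𝔤 (p.1 + p.2) - 𝔤 p.1‖,
      ((h𝔤.comp (continuous_fst.add (continuous_subtype_val.comp continuous_snd))).sub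
        (h𝔤.comp continuous_fst)).norm⟩
    have hFeq : F = fun t => ‖(ContinuousMap.curry Φ) t‖ := by
      funext t
      rw [ContinuousMap.norm_eq_iSup_norm]
      have : ∀ x : Set.Icc (-δ) δ, ‖(ContinuousMap.curry Φ t) x‖ = ‖𝔤 (t + x) - 𝔤 t‖ := by
        intro x
        simp [Φ, abs_of_nonneg (norm_nonneg _)]
      rw [iSup_congr this]
      exact (hsub t).symm
    rw [hFeq]
    exact (map_continuous (ContinuousMap.curry Φ)).norm
  -- abbreviation for the shifted functions
  set ind : ℕ → ℝ → ℝ :=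
    fun j => Set.indicator (Set.Ici ((j : ℝ) * δ)) (fun r => F (r - (j : ℝ) * δ)) with hinddef
  have hind_nonneg : ∀ j t, 0 ≤ ind j t := fun j t =>
    Set.indicator_nonneg (fun s _ => hF0 _) t
  have hind0 : ∀ t : ℝ, 0 ≤ t → ind 0 t = F t := by
    intro t ht
    simp [hinddef, Set.indicator_apply, Set.mem_Ici, ht]
  have hshift : ∀ (j : ℕ) (s : ℝ), ind j (s - δ) = ind (j + 1) s := by
    intro j s
    simp only [hinddef, Set.indicator_apply, Set.mem_Ici]
    have hc : ((j : ℝ) * δ ≤ s - δ) ↔ (((j + 1 : ℕ) : ℝ) * δ ≤ s) := by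
      push_cast; constructor <;> intro <;> nlinarith
    have hv : s - δ - (j : ℝ) * δ = s - ((j + 1 : ℕ) : ℝ) * δ := by push_cast; ring
    rw [hv]
    exact if_congr hc rfl rfl
  -- the key pointwise estimate
  have key : ∀ n : ℕ, ∀ t : ℝ, 0 ≤ t → t ≤ ((n : ℝ) + 1) * δ →
      ‖𝔤 t - 𝔤 0‖ ≤ ∑ j ∈ Finset.range (n + 1), ind j t := by
    intro n
    induction n with
    | zero =>
      intro t ht0 htδ
      rw [Finset.range_one, Finset.sum_singleton, hind0 t ht0]
      calc ‖𝔤 t - 𝔤 0‖ = ‖𝔤 (t - t) - 𝔤 t‖ := by rw [sub_self, norm_sub_rev]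
        _ ≤ F t := hhop t t ht0 (by push_cast at htδ; linarith)
    | succ n ih =>
      intro t ht0 ht
      by_cases hcase : t ≤ ((n : ℝ) + 1) * δ
      · refine (ih t ht0 hcase).trans
          (Finset.sum_le_sum_of_subset_of_nonneg (Finset.range_subset_range.mpr (by omega)) ?_)
        intro j _ _
        exact hind_nonneg j t
      · push_neg at hcase
        have hδt : δ ≤ t := by nlinarith [(Nat.cast_nonneg n : (0:ℝ) ≤ (n:ℝ))]
        calc ‖𝔤 t - 𝔤 0‖ ≤ ‖𝔤 t - 𝔤 (t - δ)‖ + ‖𝔤 (t - δ) - 𝔤 0‖ :=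
              norm_sub_le_norm_sub_add_norm_sub _ _ _
          _ ≤ F t + ∑ j ∈ Finset.range (n + 1), ind j (t - δ) := by
              refine add_le_add ?_ (ih (t - δ) (by linarith) (by push_cast at ht ⊢; linarith))
              rw [norm_sub_rev]
              exact hhop t δ hδ.le le_rfl
          _ = ind 0 t + ∑ j ∈ Finset.range (n + 1), ind (j + 1) t := by
              rw [hind0 t ht0]
              congr 1
              exact Finset.sum_congr rfl fun j _ => hshift j t
          _ = ∑ j ∈ Finset.range (n + 1 + 1), ind j t := by
              rw [Finset.sum_range_succ' (fun j => ind j t) (n + 1)]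
              ring
  -- now the main estimate
  have hωδ : 0 < ω δ := hωpos δ hδ
  refine ⟨max 1 (3 * (C * ω δ) / δ), lt_of_lt_of_le one_pos (le_max_left _ _), ?_⟩
  set C' : ℝ := max 1 (3 * (C * ω δ) / δ) with hC'def
  intro lam hlam
  have hlam0 : 0 < lam := hδ.trans hlam
  set N : ℕ := Nat.ceil (lam / δ) with hNdef
  have hNlam : lam ≤ ((N : ℝ) + 1) * δ := by
    have h1 : lam / δ ≤ (N : ℝ) := Nat.le_ceil _
    have : lam = lam / δ * δ := by field_simp
    nlinarith
  have hNle : ((N : ℝ) + 1) ≤ 3 * lam / δ := by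
    have h1 : (N : ℝ) < lam / δ + 1 := Nat.ceil_lt_add_one (by positivity)
    have h2 : 1 < lam / δ := (one_lt_div hδ).mpr hlam
    rw [mul_div_assoc]
    nlinarith
  -- integrability facts
  have hIntg : IntegrableOn (fun t => ‖𝔤 t‖) (Set.Ioc 0 lam) volume :=
    (h𝔤.norm).integrableOn_Ioc
  have hIntF : IntegrableOn F (Set.Icc 0 lam) volume := hFcont.integrableOn_Icc
  have hIndCont : ∀ j : ℕ, Continuous fun r => F (r - (j : ℝ) * δ) := fun j =>
    hFcont.comp (continuous_id.sub continuous_const)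
  have hIndInt : ∀ j : ℕ, IntegrableOn (ind j) (Set.Ioc 0 lam) volume := by
    intro j
    exact ((hIndCont j).integrableOn_Ioc).indicator measurableSet_Ici
  have hIntSum : IntegrableOn
      (fun t => ‖𝔤 0‖ + ∑ j ∈ Finset.range (N + 1), ind j t) (Set.Ioc 0 lam) volume := by
    refine (integrableOn_const measure_Ioc_lt_top.ne).add ?_
    exact integrable_finset_sum _ fun j _ => hIndInt j
  set B : ℝ := ∫ t in Set.Icc (0:ℝ) lam, F t with hBdef
  have hB0 : 0 ≤ B := setIntegral_nonneg measurableSet_Icc fun t _ => hF0 t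
  -- each shifted integral is at most B
  have hIndB : ∀ j : ℕ, (∫ t in Set.Ioc (0:ℝ) lam, ind j t) ≤ B := by
    intro j
    have hc0 : 0 ≤ (j : ℝ) * δ := by positivity
    have hInd2 : Integrable (fun t => Set.indicator (Set.Icc (0:ℝ) lam) F (t - (j : ℝ) * δ))
        volume := (hIntF.integrable_indicator measurableSet_Icc).comp_sub_right _
    calc (∫ t in Set.Ioc (0:ℝ) lam, ind j t)
        = ∫ t, Set.indicator (Set.Ioc (0:ℝ) lam) (ind j) t := by
          rw [integral_indicator measurableSet_Ioc]
      _ ≤ ∫ t, Set.indicator (Set.Icc (0:ℝ) lam) F (t - (j : ℝ) * δ) := by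
          refine integral_mono ((hIndInt j).integrable_indicator measurableSet_Ioc) hInd2
            fun t => ?_
          show Set.indicator (Set.Ioc (0:ℝ) lam) (ind j) t ≤
            Set.indicator (Set.Icc (0:ℝ) lam) F (t - (j : ℝ) * δ)
          by_cases ht : t ∈ Set.Ioc (0:ℝ) lam
          · rw [Set.indicator_of_mem ht]
            by_cases hc : t ∈ Set.Ici ((j : ℝ) * δ)
            · have hc' : (j : ℝ) * δ ≤ t := hc
              have h1 : ind j t = F (t - (j : ℝ) * δ) := Set.indicator_of_mem hc _
              have h2 : t - (j : ℝ) * δ ∈ Set.Icc (0:ℝ) lam :=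
                ⟨by linarith, by linarith [ht.2]⟩
              rw [h1, Set.indicator_of_mem h2]
            · have h1 : ind j t = 0 := Set.indicator_of_notMem hc _
              rw [h1]
              exact Set.indicator_nonneg (fun s _ => hF0 _) _
          · rw [Set.indicator_of_notMem ht]
            exact Set.indicator_nonneg (fun s _ => hF0 _) _
      _ = ∫ t, Set.indicator (Set.Icc (0:ℝ) lam) F t :=
          integral_sub_right_eq_self (Set.indicator (Set.Icc (0:ℝ) lam) F) ((j : ℝ) * δ)
      _ = B := by rw [integral_indicator measurableSet_Icc]
  -- the main real inequality
  have main_real : (∫ t in Set.Ioc (0:ℝ) lam, ‖𝔤 t‖) ≤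
      ‖𝔤 0‖ * lam + ((N : ℝ) + 1) * B := by
    calc (∫ t in Set.Ioc (0:ℝ) lam, ‖𝔤 t‖)
        ≤ ∫ t in Set.Ioc (0:ℝ) lam, (‖𝔤 0‖ + ∑ j ∈ Finset.range (N + 1), ind j t) := by
          refine setIntegral_mono_on hIntg hIntSum measurableSet_Ioc ?_
          intro t ht
          have h1 : ‖𝔤 t‖ ≤ ‖𝔤 0‖ + ‖𝔤 t - 𝔤 0‖ := by
            calc ‖𝔤 t‖ = ‖𝔤 0 + (𝔤 t - 𝔤 0)‖ := by ring_nf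
              _ ≤ ‖𝔤 0‖ + ‖𝔤 t - 𝔤 0‖ := norm_add_le _ _
          exact h1.trans (add_le_add_right (key N t ht.1.le (ht.2.trans hNlam)) _)
      _ = ‖𝔤 0‖ * lam + ∑ j ∈ Finset.range (N + 1), ∫ t in Set.Ioc (0:ℝ) lam, ind j t := by
          rw [integral_add (show Integrable (fun _ => ‖𝔤 0‖) (volume.restrict (Set.Ioc (0:ℝ) lam)) from
              integrableOn_const measure_Ioc_lt_top.ne)
            (integrable_finset_sum _ fun j _ => hIndInt j),
            integral_finset_sum _ fun j _ => hIndInt j, setIntegral_const]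
          congr 1
          simp [Real.volume_Ioc, ENNReal.toReal_ofReal hlam0.le, mul_comm, hlam0.le]
      _ ≤ ‖𝔤 0‖ * lam + ∑ j ∈ Finset.range (N + 1), B := by
          gcongr with j hj
          exact hIndB j
      _ = ‖𝔤 0‖ * lam + ((N : ℝ) + 1) * B := by
          rw [Finset.sum_const, Finset.card_range]
          push_cast
          ring
  -- Hölder step
  set Q : ℝ≥0∞ := eLpNorm (Set.indicator (Set.Ioo (-lam) lam) G) q volume with hQdef
  have hHolder : ENNReal.ofReal B ≤ ENNReal.ofReal (C * ω δ) * Q := by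
    have hmeas1 : AEStronglyMeasurable (fun t => F t / G t) volume :=
      (hFcont.aemeasurable.div hGloc.aestronglyMeasurable.aemeasurable).aestronglyMeasurable
    have hmeas2 : AEStronglyMeasurable (Set.indicator (Set.Ioo (-lam) lam) G) volume :=
      hGloc.aestronglyMeasurable.indicator measurableSet_Ioo
    have hpqr : (1 : ℝ≥0∞) / 1 = 1 / p + 1 / q := by
      simpa [one_div] using hpq.symm
    calc ENNReal.ofReal B
        = ∫⁻ t in Set.Icc (0:ℝ) lam, ENNReal.ofReal (F t) :=
          ofReal_integral_eq_lintegral_ofReal hIntF (ae_of_all _ fun t => hF0 t)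
      _ = ∫⁻ t in Set.Ioo (0:ℝ) lam, ENNReal.ofReal (F t) :=
          (setLIntegral_congr Ioo_ae_eq_Icc).symm
      _ = ∫⁻ t, Set.indicator (Set.Ioo (0:ℝ) lam) (fun t => ENNReal.ofReal (F t)) t := by
          rw [lintegral_indicator measurableSet_Ioo]
      _ ≤ ∫⁻ t, ‖(F t / G t) * Set.indicator (Set.Ioo (-lam) lam) G t‖₊ := by
          refine lintegral_mono fun t => ?_
          by_cases ht : t ∈ Set.Ioo (0:ℝ) lam
          · have hmem : t ∈ Set.Ioo (-lam) lam := ⟨by linarith [ht.1, hlam0], ht.2⟩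
            rw [Set.indicator_of_mem ht, Set.indicator_of_mem hmem,
              div_mul_cancel₀ _ (hGpos t).ne', ← enorm_eq_nnnorm, ← ofReal_norm_eq_enorm,
              Real.norm_eq_abs, abs_of_nonneg (hF0 t)]
          · rw [Set.indicator_of_notMem ht]
            exact zero_le
      _ = eLpNorm (fun t => (F t / G t) * Set.indicator (Set.Ioo (-lam) lam) G t) 1 volume :=
          by rw [eLpNorm_one_eq_lintegral_enorm]; rfl
      _ ≤ eLpNorm (fun t => F t / G t) p volume * Q := by
          have hT : ENNReal.HolderTriple p q 1 := ⟨by simpa using hpq⟩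
          have h := eLpNorm_le_eLpNorm_mul_eLpNorm'_of_norm (hpqr := hT) hmeas1 hmeas2
            (fun a b => a * b) 1 (ae_of_all _ fun t => by simp [norm_mul])
          refine h.trans (le_of_eq ?_)
          rw [ENNReal.coe_one, one_mul]
      _ ≤ ENNReal.ofReal (C * ω δ) * Q := mul_le_mul_left hHCδ Q
  -- final assembly
  have hCω : 0 < C * ω δ := mul_pos hC hωδ
  have hC'1 : (1:ℝ) ≤ C' := le_max_left _ _
  have hstep : ((N : ℝ) + 1) * (C * ω δ) ≤ C' * lam := by
    have h2 : 3 * (C * ω δ) / δ ≤ C' := le_max_right _ _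
    calc ((N : ℝ) + 1) * (C * ω δ) ≤ (3 * lam / δ) * (C * ω δ) := by nlinarith
      _ = (3 * (C * ω δ) / δ) * lam := by ring
      _ ≤ C' * lam := by nlinarith
  calc ENNReal.ofReal (∫ t in Set.Ioc (0:ℝ) lam, ‖𝔤 t‖)
      ≤ ENNReal.ofReal (‖𝔤 0‖ * lam + ((N : ℝ) + 1) * B) := ENNReal.ofReal_le_ofReal main_real
    _ ≤ ENNReal.ofReal (‖𝔤 0‖ * lam) + ENNReal.ofReal (((N : ℝ) + 1) * B) :=
        ENNReal.ofReal_add_le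
    _ ≤ ENNReal.ofReal (C' * (‖𝔤 0‖ * lam)) + ENNReal.ofReal (C' * lam) * Q := by
        gcongr ?_ + ?_
        · exact ENNReal.ofReal_le_ofReal (le_mul_of_one_le_left (by positivity) hC'1)
        · calc ENNReal.ofReal (((N : ℝ) + 1) * B)
              = ENNReal.ofReal ((N : ℝ) + 1) * ENNReal.ofReal B := by
                rw [ENNReal.ofReal_mul (by positivity)]
            _ ≤ ENNReal.ofReal ((N : ℝ) + 1) * (ENNReal.ofReal (C * ω δ) * Q) :=
                mul_le_mul_right hHolder _
            _ = ENNReal.ofReal (((N : ℝ) + 1) * (C * ω δ)) * Q := by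
                rw [← mul_assoc, ← ENNReal.ofReal_mul (by positivity)]
            _ ≤ ENNReal.ofReal (C' * lam) * Q :=
                mul_le_mul_left (ENNReal.ofReal_le_ofReal hstep) Q
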